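/- Let G be a finite simple graph with m edges. Then the number of triangles of G is at most 3·m^{3/2}. -/

import Mathlib

open Finset

lemma tri_at_vertex {V : Type*} [Fintype V] [DecidableEq V]
    (G : SimpleGraph V) [DecidableRel G.Adj] (v : V) :
    ((G.cliqueFinset 3).filter (fun t => v ∈ t)).card ≤ (G.degree v).choose 2 := by
  have h : ((G.cliqueFinset 3).filter (fun t => v ∈ t)).card
      ≤ ((G.neighborFinset v).powersetCard 2).card := by
    apply Finset.card_le_card_of_injOn (fun t => t.erase v)
    · intro t ht
      simp only [Finset.mem_coe, Finset.mem_filter, SimpleGraph.mem_cliqueFinset_iff] at ht ⊢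
      obtain ⟨⟨hcl, hcard⟩, hv⟩ := ht
      rw [Finset.mem_powersetCard]
      refine ⟨fun w hw => ?_, ?_⟩
      · rw [Finset.mem_erase] at hw
        rw [SimpleGraph.mem_neighborFinset]
        exact hcl hv hw.2 (Ne.symm hw.1)
      · rw [Finset.card_erase_of_mem hv, hcard]
    · intro t1 h1 t2 h2 he
      simp only [Finset.mem_coe, Finset.mem_filter] at h1 h2
      have h' := congrArg (insert v) he
      rwa [Finset.insert_erase h1.2, Finset.insert_erase h2.2] at h'
  rwa [Finset.card_powersetCard, SimpleGraph.card_neighborFinset_eq_degree] at h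

theorem triangle_count_le_three_m_pow
    {V : Type*} [Fintype V] [DecidableEq V]
    (G : SimpleGraph V) [DecidableRel G.Adj]
    (m : ℕ) (hm : m = G.edgeFinset.card) :
    ((G.cliqueFinset 3).card : ℝ) ≤ 3 * (m : ℝ) ^ ((3 : ℝ) / 2) := by
  classical
  set T := G.cliqueFinset 3 with hT
  by_cases hm0 : m = 0
  · have he : G.edgeFinset = ∅ := Finset.card_eq_zero.mp (hm0 ▸ hm.symm)
    have hTe : T = ∅ := by
      rw [Finset.eq_empty_iff_forall_notMem]
      intro t ht
      rw [hT, SimpleGraph.mem_cliqueFinset_iff] at ht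
      obtain ⟨hcl, hcard⟩ := ht
      obtain ⟨a, ha, b, hb, hab⟩ := Finset.one_lt_card.mp (by omega : 1 < t.card)
      have hadj := hcl ha hb hab
      have hedge : s(a, b) ∈ G.edgeFinset := SimpleGraph.mem_edgeFinset.mpr hadj
      simp [he] at hedge
    rw [hTe]
    simp [hm0]
  · have hm1 : (1 : ℝ) ≤ (m : ℝ) := by exact_mod_cast Nat.one_le_iff_ne_zero.mpr hm0
    have hmpos : (0 : ℝ) < m := by linarith
    set sqm := Real.sqrt m with hsqdef
    have hsqpos : 0 < sqm := Real.sqrt_pos.mpr hmpos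
    have hsqsq : sqm * sqm = m := Real.mul_self_sqrt (le_of_lt hmpos)
    have hdlesq : ∀ v : V, (G.degree v)^2 ≤ m → (G.degree v : ℝ) ≤ sqm := by
      intro v hv
      have h1 : (G.degree v : ℝ) = Real.sqrt (((G.degree v)^2 : ℕ) : ℝ) := by
        push_cast
        rw [Real.sqrt_sq (by positivity)]
      rw [h1, hsqdef]
      exact Real.sqrt_le_sqrt (by exact_mod_cast hv)
    have hsqled : ∀ v : V, m < (G.degree v)^2 → sqm ≤ (G.degree v : ℝ) := by
      intro v hv
      have h1 : (G.degree v : ℝ) = Real.sqrt (((G.degree v)^2 : ℕ) : ℝ) := by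
        push_cast
        rw [Real.sqrt_sq (by positivity)]
      rw [h1, hsqdef]
      exact Real.sqrt_le_sqrt (by exact_mod_cast le_of_lt hv)
    have hdegsum : (∑ v, (G.degree v : ℝ)) = 2 * m := by
      have h := G.sum_degrees_eq_twice_card_edges
      rw [← hm] at h
      exact_mod_cast congrArg (fun n : ℕ => (n : ℝ)) h
    set L := Finset.univ.filter (fun v => (G.degree v)^2 ≤ m) with hL
    set H := Finset.univ.filter (fun v => m < (G.degree v)^2) with hH
    have hsplit : T.card = (T.filter (fun t => ∃ v ∈ t, (G.degree v)^2 ≤ m)).card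
        + (T.filter (fun t => ¬ ∃ v ∈ t, (G.degree v)^2 ≤ m)).card :=
      (Finset.card_filter_add_card_filter_not _).symm
    -- low part
    have hlow : (T.filter (fun t => ∃ v ∈ t, (G.degree v)^2 ≤ m)).card
        ≤ ∑ v ∈ L, (G.degree v).choose 2 := by
      have hsub : T.filter (fun t => ∃ v ∈ t, (G.degree v)^2 ≤ m)
          ⊆ L.biUnion (fun v => T.filter (fun t => v ∈ t)) := by
        intro t ht
        rw [Finset.mem_filter] at ht
        obtain ⟨htT, v, hv, hvlow⟩ := ht
        rw [Finset.mem_biUnion]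
        exact ⟨v, by simp [hL, hvlow], by simp [Finset.mem_filter, htT, hv]⟩
      calc (T.filter (fun t => ∃ v ∈ t, (G.degree v)^2 ≤ m)).card
          ≤ (L.biUnion (fun v => T.filter (fun t => v ∈ t))).card := Finset.card_le_card hsub
        _ ≤ ∑ v ∈ L, (T.filter (fun t => v ∈ t)).card := Finset.card_biUnion_le
        _ ≤ ∑ v ∈ L, (G.degree v).choose 2 :=
            Finset.sum_le_sum (fun v _ => tri_at_vertex G v)
    -- high part
    have hhigh : (T.filter (fun t => ¬ ∃ v ∈ t, (G.degree v)^2 ≤ m)).card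
        ≤ H.card.choose 3 := by
      have hsub : T.filter (fun t => ¬ ∃ v ∈ t, (G.degree v)^2 ≤ m)
          ⊆ H.powersetCard 3 := by
        intro t ht
        rw [Finset.mem_filter] at ht
        obtain ⟨htT, hnot⟩ := ht
        push_neg at hnot
        rw [Finset.mem_powersetCard]
        refine ⟨fun v hv => ?_, ?_⟩
        · simp only [hH, Finset.mem_filter, Finset.mem_univ, true_and]
          exact hnot v hv
        · exact ((SimpleGraph.mem_cliqueFinset_iff).mp htT).2
      calc (T.filter (fun t => ¬ ∃ v ∈ t, (G.degree v)^2 ≤ m)).card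
          ≤ (H.powersetCard 3).card := Finset.card_le_card hsub
        _ = H.card.choose 3 := Finset.card_powersetCard _ _
    -- low real bound
    have hlowR : (∑ v ∈ L, ((G.degree v).choose 2 : ℝ)) ≤ (m : ℝ) * sqm := by
      have step : ∀ v ∈ L, ((G.degree v).choose 2 : ℝ) ≤ sqm / 2 * (G.degree v : ℝ) := by
        intro v hv
        rw [hL, Finset.mem_filter] at hv
        have hd : (G.degree v : ℝ) ≤ sqm := hdlesq v hv.2
        calc ((G.degree v).choose 2 : ℝ) ≤ ((G.degree v : ℝ))^2 / (Nat.factorial 2) := by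
              exact_mod_cast Nat.choose_le_pow_div 2 (G.degree v)
          _ = (G.degree v : ℝ) * (G.degree v : ℝ) / 2 := by
              rw [pow_two]; norm_num [Nat.factorial]
          _ ≤ sqm * (G.degree v : ℝ) / 2 := by
              apply div_le_div_of_nonneg_right ?_ (by norm_num)
              exact mul_le_mul_of_nonneg_right hd (by positivity)
          _ = sqm / 2 * (G.degree v : ℝ) := by ring
      calc (∑ v ∈ L, ((G.degree v).choose 2 : ℝ))
          ≤ ∑ v ∈ L, (sqm / 2 * (G.degree v : ℝ)) := Finset.sum_le_sum step
        _ = sqm / 2 * ∑ v ∈ L, (G.degree v : ℝ) := by rw [Finset.mul_sum]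
        _ ≤ sqm / 2 * ∑ v, (G.degree v : ℝ) := by
            apply mul_le_mul_of_nonneg_left ?_ (by positivity)
            exact Finset.sum_le_sum_of_subset_of_nonneg (Finset.subset_univ L)
              (fun v _ _ => by positivity)
        _ = sqm / 2 * (2 * m) := by rw [hdegsum]
        _ = (m : ℝ) * sqm := by ring
    -- high card bound
    have hHcard : (H.card : ℝ) ≤ 2 * sqm := by
      have hlb : (H.card : ℝ) * sqm ≤ ∑ v ∈ H, (G.degree v : ℝ) := by
        have h := Finset.card_nsmul_le_sum H (fun v => (G.degree v : ℝ)) sqm ?_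
        · simpa [nsmul_eq_mul] using h
        · intro v hv
          rw [hH, Finset.mem_filter] at hv
          exact hsqled v hv.2
      have hub : (∑ v ∈ H, (G.degree v : ℝ)) ≤ 2 * m := by
        rw [← hdegsum]
        exact Finset.sum_le_sum_of_subset_of_nonneg (Finset.subset_univ H)
          (fun v _ _ => by positivity)
      have hkey : (H.card : ℝ) * sqm ≤ 2 * sqm * sqm := by
        have : (2 : ℝ) * sqm * sqm = 2 * m := by rw [mul_assoc, hsqsq]
        linarith
      exact le_of_mul_le_mul_right hkey hsqpos
    have hhighR : (H.card.choose 3 : ℝ) ≤ 2 * ((m : ℝ) * sqm) := by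
      calc (H.card.choose 3 : ℝ) ≤ ((H.card : ℝ))^3 / (Nat.factorial 3) := by
            exact_mod_cast Nat.choose_le_pow_div 3 H.card
        _ ≤ (2 * sqm)^3 / 6 := by
            norm_num [Nat.factorial]
            gcongr
        _ = (8 / 6) * (sqm * sqm) * sqm := by ring
        _ ≤ 2 * ((m : ℝ) * sqm) := by rw [hsqsq]; nlinarith
    -- combine
    have hfinal : (T.card : ℝ) ≤ 3 * ((m : ℝ) * sqm) := by
      rw [hsplit]
      push_cast
      have h1 : ((T.filter (fun t => ∃ v ∈ t, (G.degree v)^2 ≤ m)).card : ℝ) ≤ (m : ℝ) * sqm := by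
        calc ((T.filter (fun t => ∃ v ∈ t, (G.degree v)^2 ≤ m)).card : ℝ)
            ≤ ((∑ v ∈ L, (G.degree v).choose 2 : ℕ) : ℝ) := by exact_mod_cast hlow
          _ = ∑ v ∈ L, ((G.degree v).choose 2 : ℝ) := by push_cast; rfl
          _ ≤ (m : ℝ) * sqm := hlowR
      have h2 : ((T.filter (fun t => ¬ ∃ v ∈ t, (G.degree v)^2 ≤ m)).card : ℝ)
          ≤ 2 * ((m : ℝ) * sqm) := by
        calc ((T.filter (fun t => ¬ ∃ v ∈ t, (G.degree v)^2 ≤ m)).card : ℝ)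
            ≤ (H.card.choose 3 : ℝ) := by exact_mod_cast hhigh
          _ ≤ 2 * ((m : ℝ) * sqm) := hhighR
      linarith
    have hpow : (m : ℝ) ^ ((3 : ℝ) / 2) = (m : ℝ) * sqm := by
      rw [show (3 : ℝ) / 2 = 1 + 1 / 2 by norm_num, Real.rpow_add hmpos, Real.rpow_one,
        hsqdef, Real.sqrt_eq_rpow]
    rw [hpow]
    exact hfinal
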